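/- A commutative transitive group in which the centralizer of every nontrivial element is self-normalizing is CSA: every maximal abelian subgroup M is malnormal, i.e., M ∩ g M g⁻¹ ≠ {1} implies g ∈ M. -/

import Mathlib

/-- A commutative transitive group in which centralizers of nontrivial elements
are self-normalizing is CSA: every maximal abelian subgroup is malnormal. -/
theorem csa_of_commTransitive_selfNormalizing
    (G : Type) [Group G]
    (hct : ∀ a b c : G, a * b = b * a → b * c = c * b → b ≠ 1 → a * c = c * a)
    (hsn : ∀ x : G, x ≠ 1 →
        Subgroup.normalizer (Subgroup.centralizer {x} : Set G) = Subgroup.centralizer {x}) :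
    ∀ M : Subgroup G,
      (∀ a ∈ M, ∀ b ∈ M, a * b = b * a) →
      (∀ N : Subgroup G, (∀ a ∈ N, ∀ b ∈ N, a * b = b * a) → M ≤ N → N = M) →
      ∀ g : G, (∃ y : G, y ≠ 1 ∧ y ∈ M ∧ g * y * g⁻¹ ∈ M) → g ∈ M := by
  intro M hab hmax g ⟨y, hy1, hyM, hzM⟩
  -- centralizer of any nontrivial element of M equals M
  have key : ∀ x : G, x ≠ 1 → x ∈ M → Subgroup.centralizer {x} = M := by
    intro x hx1 hxM
    apply hmax
    · intro a ha b hb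
      rw [Subgroup.mem_centralizer_singleton_iff] at ha hb
      exact hct a x b ha hb.symm hx1
    · intro m hm
      rw [Subgroup.mem_centralizer_singleton_iff]
      exact (hab x hxM m hm).symm
  have hCy := key y hy1 hyM
  have hz1 : g * y * g⁻¹ ≠ 1 := by
    intro h
    apply hy1
    have : g * y * g⁻¹ = g * 1 * g⁻¹ := by simpa using h
    simpa using mul_left_cancel (mul_right_cancel this)
  have hCz := key _ hz1 hzM
  -- g normalizes centralizer {y}
  have hg : g ∈ Subgroup.normalizer (Subgroup.centralizer {y} : Set G) := by
    rw [Subgroup.mem_normalizer_iff]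
    intro h
    constructor
    · intro hh
      rw [Subgroup.mem_centralizer_singleton_iff] at hh
      rw [hCy, ← hCz, Subgroup.mem_centralizer_singleton_iff]
      calc g * h * g⁻¹ * (g * y * g⁻¹) = g * (h * y) * g⁻¹ := by group
        _ = g * (y * h) * g⁻¹ := by rw [hh]
        _ = (g * y * g⁻¹) * (g * h * g⁻¹) := by group
    · intro hh
      rw [hCy, ← hCz, Subgroup.mem_centralizer_singleton_iff] at hh
      rw [Subgroup.mem_centralizer_singleton_iff]
      have e : g * (h * y) * g⁻¹ = g * (y * h) * g⁻¹ := by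
        calc g * (h * y) * g⁻¹ = (g * h * g⁻¹) * (g * y * g⁻¹) := by group
          _ = (g * y * g⁻¹) * (g * h * g⁻¹) := hh
          _ = g * (y * h) * g⁻¹ := by group
      exact mul_left_cancel (mul_right_cancel e)
  rw [hsn y hy1, hCy] at hg
  exact hg
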